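/- For every C > 0 and every x̄ ∈ ℝ one has (4x̄/C)·∫_{−∞}^{x̄} exp(−2y²/C) dy + exp(−2x̄²/C) > 0. Consequently, the function ψ̂(x̄) = exp(−2x̄²/C)·(∫_{−∞}^{x̄} exp(−2y²/C) dy)^{−1} has strictly negative derivative at every point x̄ ∈ ℝ. -/

import Mathlib

open Real MeasureTheory Set Filter Topology ENNReal

section aux

variable {C : ℝ}

private lemma exp_eq (C : ℝ) (y : ℝ) (hC : C ≠ 0) :
    Real.exp (-2*y^2/C) = Real.exp (-(2/C)*y^2) := by
  congr 1; field_simp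

private lemma f_integrable (hC : 0 < C) :
    Integrable (fun y : ℝ => Real.exp (-2*y^2/C)) := by
  have h := integrable_exp_neg_mul_sq (b := 2/C) (by positivity)
  exact h.congr (Filter.Eventually.of_forall fun y => (exp_eq C y hC.ne').symm)

private lemma yf_integrable (hC : 0 < C) :
    Integrable (fun y : ℝ => y * Real.exp (-2*y^2/C)) := by
  have h := integrable_mul_exp_neg_mul_sq (b := 2/C) (by positivity)
  exact h.congr (Filter.Eventually.of_forall fun y => by
    show y * Real.exp (-(2/C)*y^2) = y * Real.exp (-2*y^2/C)
    rw [exp_eq C y hC.ne'])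

private lemma F_pos (hC : 0 < C) (x : ℝ) :
    0 < ∫ y in Set.Iic x, Real.exp (-2*y^2/C) := by
  rw [setIntegral_pos_iff_support_of_nonneg_ae
    (Filter.Eventually.of_forall fun y => (Real.exp_pos _).le)
    ((f_integrable hC).integrableOn)]
  have hsub : Set.Iio x ⊆ Function.support (fun y : ℝ => Real.exp (-2*y^2/C)) ∩ Set.Iic x :=
    fun y hy => ⟨(Real.exp_pos _).ne', le_of_lt (Set.mem_Iio.mp hy)⟩
  calc (0 : ℝ≥0∞) < ⊤ := by simp
    _ = volume (Set.Iio x) := (Real.volume_Iio).symm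
    _ ≤ _ := measure_mono hsub

private lemma N_hasDerivAt (hC : 0 < C) (x : ℝ) :
    HasDerivAt (fun x : ℝ => Real.exp (-2*x^2/C))
      (Real.exp (-2*x^2/C) * (-4*x/C)) x := by
  have h1 : HasDerivAt (fun x : ℝ => -2*x^2/C) (-4*x/C) x := by
    have := ((hasDerivAt_pow 2 x).const_mul (-2 : ℝ)).div_const C
    refine this.congr_deriv ?_
    ring
  exact h1.exp

private lemma F_hasDerivAt (hC : 0 < C) (x : ℝ) :
    HasDerivAt (fun x : ℝ => ∫ y in Set.Iic x, Real.exp (-2*y^2/C))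
      (Real.exp (-2*x^2/C)) x := by
  have hfc : Continuous (fun y : ℝ => Real.exp (-2*y^2/C)) := by
    apply Real.continuous_exp.comp
    continuity
  have heq : (fun x : ℝ => ∫ y in Set.Iic x, Real.exp (-2*y^2/C))
      = fun x : ℝ => (∫ y in Set.Iic (0:ℝ), Real.exp (-2*y^2/C))
          + ∫ y in (0:ℝ)..x, Real.exp (-2*y^2/C) := by
    funext x
    have h := intervalIntegral.integral_Iic_sub_Iic (μ := volume) (a := (0:ℝ)) (b := x)
      ((f_integrable hC).integrableOn) ((f_integrable hC).integrableOn)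
    linarith
  rw [heq]
  have h2 := intervalIntegral.integral_hasDerivAt_right (a := (0:ℝ)) (b := x)
    ((f_integrable hC).intervalIntegrable)
    (hfc.stronglyMeasurableAtFilter _ _) hfc.continuousAt
  exact h2.const_add (∫ y in Set.Iic (0:ℝ), Real.exp (-2*y^2/C))

private lemma key_integral (hC : 0 < C) (a : ℝ) :
    ∫ y in Set.Iic a, y * Real.exp (-2*y^2/C)
      = -(C/4) * Real.exp (-2*a^2/C) := by
  have hderiv : ∀ x ∈ Set.Iic a,
      HasDerivAt (fun y : ℝ => -(C/4) * Real.exp (-2*y^2/C))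
        (x * Real.exp (-2*x^2/C)) x := by
    intro x _
    have := (N_hasDerivAt hC x).const_mul (-(C/4))
    refine this.congr_deriv ?_
    field_simp
  have htend : Tendsto (fun y : ℝ => -(C/4) * Real.exp (-2*y^2/C)) atBot (𝓝 0) := by
    have hsq : Tendsto (fun y : ℝ => y^2) atBot atTop := by
      have h := (tendsto_pow_atTop (α := ℝ) (n := 2) two_ne_zero).comp tendsto_abs_atBot_atTop
      refine h.congr fun y => ?_
      simp [Function.comp, sq_abs]
    have h2 : Tendsto (fun y : ℝ => (2/C) * y^2) atBot atTop :=
      hsq.const_mul_atTop (by positivity)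
    have h3 : Tendsto (fun y : ℝ => -2*y^2/C) atBot atBot := by
      refine (tendsto_neg_atTop_atBot.comp h2).congr fun y => ?_
      simp only [Function.comp_apply]
      field_simp
    have h4 : Tendsto (fun y : ℝ => Real.exp (-2*y^2/C)) atBot (𝓝 0) :=
      Real.tendsto_exp_atBot.comp h3
    simpa using h4.const_mul (-(C/4))
  have := integral_Iic_of_hasDerivAt_of_tendsto' hderiv
    ((yf_integrable hC).integrableOn) htend
  rw [this]; ring

private lemma main_ineq (hC : 0 < C) (xb : ℝ) :
    0 < (4*xb/C) * (∫ y in Set.Iic xb, Real.exp (-2*y^2/C))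
          + Real.exp (-2*xb^2/C) := by
  set F := ∫ y in Set.Iic xb, Real.exp (-2*y^2/C) with hF
  have hFpos := F_pos hC xb
  have hE : 0 < Real.exp (-2*xb^2/C) := Real.exp_pos _
  rcases le_or_gt 0 xb with hxb | hxb
  · have h1 : 0 ≤ (4*xb/C) * F := mul_nonneg (by positivity) hFpos.le
    linarith
  · -- xb < 0
    have hint : IntegrableOn (fun y : ℝ => (y/xb - 1) * Real.exp (-2*y^2/C))
        (Set.Iic xb) := by
      have h1 : (fun y : ℝ => (y/xb - 1) * Real.exp (-2*y^2/C))
          = fun y : ℝ => (1/xb) * (y * Real.exp (-2*y^2/C))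
              - Real.exp (-2*y^2/C) := by
        funext y; field_simp
      rw [h1]
      exact (((yf_integrable hC).const_mul (1/xb)).sub (f_integrable hC)).integrableOn
    have hpos : 0 < ∫ y in Set.Iic xb, (y/xb - 1) * Real.exp (-2*y^2/C) := by
      have hae : 0 ≤ᵐ[volume.restrict (Set.Iic xb)]
          fun y : ℝ => (y/xb - 1) * Real.exp (-2*y^2/C) := by
        filter_upwards [ae_restrict_mem measurableSet_Iic] with y hy
        have hy' : y ≤ xb := hy
        have h1 : 1 ≤ y / xb := by
          rw [le_div_iff_of_neg hxb]
          linarith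
        exact mul_nonneg (by linarith) (Real.exp_pos _).le
      rw [setIntegral_pos_iff_support_of_nonneg_ae hae hint]
      · have hsub : Set.Iio xb ⊆
            Function.support (fun y : ℝ => (y/xb - 1) * Real.exp (-2*y^2/C))
              ∩ Set.Iic xb := by
          intro y hy
          have hy' : y < xb := hy
          have h1 : 1 < y / xb := by
            rw [lt_div_iff_of_neg hxb]
            linarith
          refine ⟨?_, hy'.le⟩
          have : 0 < (y/xb - 1) * Real.exp (-2*y^2/C) :=
            _root_.mul_pos (by linarith) (Real.exp_pos _)
          exact this.ne'
        calc (0 : ℝ≥0∞) < ⊤ := by simp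
          _ = volume (Set.Iio xb) := (Real.volume_Iio).symm
          _ ≤ _ := measure_mono hsub
    have hsplit : (∫ y in Set.Iic xb, (y/xb - 1) * Real.exp (-2*y^2/C))
        = (1/xb) * (∫ y in Set.Iic xb, y * Real.exp (-2*y^2/C)) - F := by
      have h1 : (fun y : ℝ => (y/xb - 1) * Real.exp (-2*y^2/C))
          = fun y : ℝ => (1/xb) * (y * Real.exp (-2*y^2/C))
              - Real.exp (-2*y^2/C) := by
        funext y; field_simp
      rw [h1, integral_sub (((yf_integrable hC).const_mul (1/xb)).integrableOn)
        ((f_integrable hC).integrableOn), integral_const_mul]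
    rw [hsplit, key_integral hC xb] at hpos
    -- hpos : 0 < (1/xb) * (-(C/4) * E) - F, i.e. F < -(C/(4xb)) * E
    have hkey : -(C/4) * Real.exp (-2*xb^2/C) < xb * F := by
      have h2 : F < (1/xb) * (-(C/4) * Real.exp (-2*xb^2/C)) := by linarith
      have h3 := mul_lt_mul_of_neg_left h2 hxb
      have h4 : xb * (1/xb * (-(C/4) * Real.exp (-2*xb^2/C)))
          = -(C/4) * Real.exp (-2*xb^2/C) := by
        field_simp [hxb.ne]
      linarith
    have heq : (4*xb/C) * F + Real.exp (-2*xb^2/C)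
        = (4/C) * (xb * F + (C/4) * Real.exp (-2*xb^2/C)) := by
      field_simp
    rw [heq]
    apply _root_.mul_pos (by positivity)
    linarith

end aux

/-- The inequality `(4x̄/C)·∫_{-∞}^{x̄} exp(-2y²/C) dy + exp(-2x̄²/C) > 0`, and
consequently the function `ψ̂(x̄) = exp(-2x̄²/C)·(∫_{-∞}^{x̄} exp(-2y²/C) dy)⁻¹`
has strictly negative derivative at every point. -/
theorem stmt_9 (C : ℝ) (hC : 0 < C) :
    (∀ xb : ℝ,
      0 < (4*xb/C) * (∫ y in Set.Iic xb, Real.exp (-2*y^2/C))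
            + Real.exp (-2*xb^2/C)) ∧
    (∀ xb : ℝ, ∃ d : ℝ, d < 0 ∧
      HasDerivAt
        (fun x => Real.exp (-2*x^2/C) / ∫ y in Set.Iic x, Real.exp (-2*y^2/C))
        d xb) := by
  refine ⟨main_ineq hC, fun xb => ?_⟩
  set F := ∫ y in Set.Iic xb, Real.exp (-2*y^2/C) with hF
  set E := Real.exp (-2*xb^2/C) with hE
  have hFpos := F_pos hC xb
  have hEpos : 0 < E := Real.exp_pos _
  refine ⟨(E * (-4*xb/C) * F - E * E) / F^2, ?_, ?_⟩
  · apply div_neg_of_neg_of_pos _ (by positivity)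
    have h1 := main_ineq hC xb
    have heq : E * (-4*xb/C) * F - E * E = -(E * ((4*xb/C) * F + E)) := by ring
    rw [heq]
    exact neg_lt_zero.mpr (_root_.mul_pos hEpos h1)
  · exact (N_hasDerivAt hC xb).div (F_hasDerivAt hC xb) hFpos.ne'
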